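/- For all natural numbers c, t, u, v, w: the sum over i from 0 to c of C(t+i, u)·C(v+i, w) equals the triple sum over integers a, b, j of C(t, u−a)·C(v, w−b)·C(c+j+1, a+b+1)·C(a,j)·C(b,j). -/

import Mathlib

open Finset

/-- trinomial revision, unconditional form -/
lemma tri1 (b q i : ℕ) : b.choose (q + i) * (q + i).choose q = b.choose q * (b - q).choose i := by
  rcases le_or_gt (q + i) b with h | h
  · rw [Nat.choose_mul (Nat.le_add_right q i)]
    congr 1
    · congr 1; omega
  · rcases le_or_gt q b with h2 | h2
    · rw [Nat.choose_eq_zero_of_lt h, Nat.choose_eq_zero_of_lt (by omega : b - q < i)]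
      ring
    · rw [Nat.choose_eq_zero_of_lt h, Nat.choose_eq_zero_of_lt h2]
      ring

/-- disjoint-subset symmetry, unconditional -/
lemma disj (n x y : ℕ) : n.choose x * (n - x).choose y = n.choose y * (n - y).choose x := by
  rcases le_or_gt (x + y) n with h | h
  · have h1 := tri1 n x y
    have h2 := tri1 n y x
    rw [Nat.add_comm y x, ← Nat.choose_symm_add] at h2
    omega
  · rcases le_or_gt x n with hx | hx
    · rcases le_or_gt y n with hy | hy
      · rw [Nat.choose_eq_zero_of_lt (show n - x < y by omega),
          Nat.choose_eq_zero_of_lt (show n - y < x by omega)]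
        ring
      · rw [Nat.choose_eq_zero_of_lt hy]
        rw [Nat.choose_eq_zero_of_lt (show n - x < y by omega)]
        ring
    · rw [Nat.choose_eq_zero_of_lt hx]
      rcases le_or_gt y n with hy | hy
      · rw [Nat.choose_eq_zero_of_lt (show n - y < x by omega)]
        ring
      · rw [Nat.choose_eq_zero_of_lt hy]
        ring

lemma TAzero (a b q : ℕ) (h : min a b < q) :
    ∑ j ∈ range (a + 1), a.choose j * b.choose j * j.choose q = 0 := by
  apply Finset.sum_eq_zero
  intro j hj
  have hj' := mem_range.mp hj
  rcases le_or_gt j b with hj2 | hj2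
  · rw [Nat.choose_eq_zero_of_lt (show j < q by omega)]; ring
  · rw [Nat.choose_eq_zero_of_lt hj2]; ring

lemma TA (a b q : ℕ) (hqa : q ≤ a) (hqb : q ≤ b) :
    ∑ j ∈ range (a + 1), a.choose j * b.choose j * j.choose q
      = b.choose q * (a + b - q).choose (a - q) := by
  have hsplit : a + 1 = q + (a - q + 1) := by omega
  rw [hsplit, Finset.sum_range_add]
  have h0 : ∑ j ∈ range q, a.choose j * b.choose j * j.choose q = 0 := by
    apply Finset.sum_eq_zero
    intro j hj
    rw [Nat.choose_eq_zero_of_lt (mem_range.mp hj)]; ring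
  rw [h0, zero_add]
  have step : ∀ i ∈ range (a - q + 1),
      a.choose (q + i) * b.choose (q + i) * (q + i).choose q
        = b.choose q * ((b - q).choose i * a.choose (a - q - i)) := by
    intro i hi
    have hi' : i ≤ a - q := by have := mem_range.mp hi; omega
    have hsymm : a.choose (q + i) = a.choose (a - q - i) := by
      rw [← Nat.choose_symm (show q + i ≤ a by omega)]
      congr 1; omega
    calc a.choose (q + i) * b.choose (q + i) * (q + i).choose q
        = a.choose (q + i) * (b.choose (q + i) * (q + i).choose q) := by ring
      _ = a.choose (q + i) * (b.choose q * (b - q).choose i) := by rw [tri1]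
      _ = b.choose q * ((b - q).choose i * a.choose (a - q - i)) := by rw [hsymm]; ring
  rw [Finset.sum_congr rfl step, ← Finset.mul_sum]
  congr 1
  have hv := Nat.add_choose_eq (b - q) a (a - q)
  rw [Finset.Nat.sum_antidiagonal_eq_sum_range_succ_mk] at hv
  have : (b - q + a).choose (a - q) = (a + b - q).choose (a - q) := by
    congr 1; omega
  rw [← hv, this]

lemma keyL (n a b : ℕ) :
    n.choose a * n.choose b
      = ∑ j ∈ range (min a b + 1), (n + j).choose (a + b) * a.choose j * b.choose j := by
  -- extend to range (a+1)
  have e1 : ∑ j ∈ range (min a b + 1), (n + j).choose (a + b) * a.choose j * b.choose j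
      = ∑ j ∈ range (a + 1), (n + j).choose (a + b) * a.choose j * b.choose j := by
    apply Finset.sum_subset (Finset.range_subset_range.mpr (by omega))
    intro j hj hj'
    have h1 := mem_range.mp hj
    have h2 : ¬ j < min a b + 1 := fun h => hj' (mem_range.mpr h)
    rw [Nat.choose_eq_zero_of_lt (show b < j by omega)]
    ring
  rw [e1]
  -- Vandermonde on (n+j).choose (a+b)
  have e2 : ∀ j ∈ range (a + 1), (n + j).choose (a + b) * a.choose j * b.choose j
      = ∑ k ∈ range (a + b + 1),
          n.choose (a + b - k) * (a.choose j * b.choose j * j.choose k) := by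
    intro j _
    rw [show n + j = j + n by omega, Nat.add_choose_eq,
      Finset.Nat.sum_antidiagonal_eq_sum_range_succ_mk, Finset.sum_mul, Finset.sum_mul]
    apply Finset.sum_congr rfl
    intro k _
    ring
  rw [Finset.sum_congr rfl e2, Finset.sum_comm]
  -- inner sums: factor n.choose (a+b-k)
  have e3 : ∀ k ∈ range (a + b + 1),
      ∑ j ∈ range (a + 1), n.choose (a + b - k) * (a.choose j * b.choose j * j.choose k)
        = n.choose (a + b - k) * ∑ j ∈ range (a + 1), a.choose j * b.choose j * j.choose k := by
    intro k _
    rw [Finset.mul_sum]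
  rw [Finset.sum_congr rfl e3]
  -- shrink k-range to min a b + 1
  have e4 : ∑ k ∈ range (a + b + 1),
        n.choose (a + b - k) * ∑ j ∈ range (a + 1), a.choose j * b.choose j * j.choose k
      = ∑ k ∈ range (min a b + 1),
        n.choose (a + b - k) * ∑ j ∈ range (a + 1), a.choose j * b.choose j * j.choose k := by
    symm
    apply Finset.sum_subset (Finset.range_subset_range.mpr (by omega))
    intro k hk hk'
    have h2 : ¬ k < min a b + 1 := fun h => hk' (mem_range.mpr h)
    rw [TAzero a b k (by omega), mul_zero]
  rw [e4]
  -- apply TA and trinomial/disjoint rewrites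
  have e5 : ∀ k ∈ range (min a b + 1),
      n.choose (a + b - k) * ∑ j ∈ range (a + 1), a.choose j * b.choose j * j.choose k
        = n.choose b * (b.choose k * (n - b).choose (a - k)) := by
    intro k hk
    have hk' := mem_range.mp hk
    rw [TA a b k (by omega) (by omega)]
    have h1 : a + b - k = (a - k) + b := by omega
    have h2 := tri1 n (a - k) b
    have h3 := disj n (a - k) b
    calc n.choose (a + b - k) * (b.choose k * (a + b - k).choose (a - k))
        = b.choose k * (n.choose ((a - k) + b) * ((a - k) + b).choose (a - k)) := by
          rw [h1]; ring
      _ = b.choose k * (n.choose (a - k) * (n - (a - k)).choose b) := by rw [h2]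
      _ = b.choose k * (n.choose b * (n - b).choose (a - k)) := by rw [h3]
      _ = n.choose b * (b.choose k * (n - b).choose (a - k)) := by ring
  rw [Finset.sum_congr rfl e5, ← Finset.mul_sum]
  -- extend k-range back to a+1 and apply Vandermonde
  have e6 : ∑ k ∈ range (min a b + 1), b.choose k * (n - b).choose (a - k)
      = ∑ k ∈ range (a + 1), b.choose k * (n - b).choose (a - k) := by
    apply Finset.sum_subset (Finset.range_subset_range.mpr (by omega))
    intro k hk hk'
    have h1 := mem_range.mp hk
    have h2 : ¬ k < min a b + 1 := fun h => hk' (mem_range.mpr h)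
    rw [Nat.choose_eq_zero_of_lt (show b < k by omega)]
    ring
  rw [e6]
  rcases le_or_gt b n with hb | hb
  · have hv := Nat.add_choose_eq b (n - b) a
    rw [Finset.Nat.sum_antidiagonal_eq_sum_range_succ_mk,
      show b + (n - b) = n by omega] at hv
    rw [← hv]
    ring
  · rw [Nat.choose_eq_zero_of_lt hb]
    ring

lemma keyM (c a b : ℕ) :
    ∑ i ∈ range (c + 1), i.choose a * i.choose b
      = ∑ j ∈ range (min a b + 1), (c + j + 1).choose (a + b + 1) * a.choose j * b.choose j := by
  induction c with
  | zero =>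
    rw [Finset.sum_range_one, keyL 0 a b]
    apply Finset.sum_congr rfl
    intro j hj
    have hj' := mem_range.mp hj
    rw [show 0 + j + 1 = j + 1 by omega, Nat.choose_succ_succ' j (a + b),
      Nat.choose_eq_zero_of_lt (show j < a + b + 1 by omega), add_zero, zero_add]
  | succ c ih =>
    rw [Finset.sum_range_succ, ih, keyL (c + 1) a b, ← Finset.sum_add_distrib]
    apply Finset.sum_congr rfl
    intro j hj
    rw [show c + 1 + j + 1 = (c + j + 1) + 1 by omega,
      Nat.choose_succ_succ' (c + j + 1) (a + b), show c + 1 + j = c + j + 1 by omega]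
    ring

lemma vand (t i u : ℕ) :
    (t + i).choose u = ∑ a ∈ range (u + 1), t.choose (u - a) * i.choose a := by
  rw [show t + i = i + t by omega, Nat.add_choose_eq,
    Finset.Nat.sum_antidiagonal_eq_sum_range_succ_mk]
  apply Finset.sum_congr rfl
  intro k _
  ring



/-- The sum over `i` from `0` to `c` of `C(t+i,u)·C(v+i,w)` equals the triple sum over
integers `a, b, j` of `C(t,u−a)·C(v,w−b)·C(c+j+1,a+b+1)·C(a,j)·C(b,j)`.  By the vanishing
conventions, the only nonzero terms have `0 ≤ a ≤ u`, `0 ≤ b ≤ w`, `0 ≤ j ≤ min a b`. -/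
theorem stmt2 (c t u v w : ℕ) :
    ∑ i ∈ Finset.range (c + 1), (t + i).choose u * (v + i).choose w
    = ∑ a ∈ Finset.range (u + 1), ∑ b ∈ Finset.range (w + 1),
        ∑ j ∈ Finset.range (min a b + 1),
          t.choose (u - a) * v.choose (w - b) *
            (c + j + 1).choose (a + b + 1) * a.choose j * b.choose j := by
  calc ∑ i ∈ range (c + 1), (t + i).choose u * (v + i).choose w
      = ∑ i ∈ range (c + 1), ∑ a ∈ range (u + 1), ∑ b ∈ range (w + 1),
          (t.choose (u - a) * v.choose (w - b)) * (i.choose a * i.choose b) := by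
        apply Finset.sum_congr rfl
        intro i _
        rw [vand t i u, vand v i w, Finset.sum_mul]
        apply Finset.sum_congr rfl
        intro a _
        rw [Finset.mul_sum]
        apply Finset.sum_congr rfl
        intro b _
        ring
    _ = ∑ a ∈ range (u + 1), ∑ b ∈ range (w + 1),
          (t.choose (u - a) * v.choose (w - b)) * ∑ i ∈ range (c + 1), i.choose a * i.choose b := by
        rw [Finset.sum_comm]
        apply Finset.sum_congr rfl
        intro a _
        rw [Finset.sum_comm]
        apply Finset.sum_congr rfl
        intro b _
        rw [Finset.mul_sum]
    _ = ∑ a ∈ range (u + 1), ∑ b ∈ range (w + 1), ∑ j ∈ range (min a b + 1),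
          t.choose (u - a) * v.choose (w - b) *
            (c + j + 1).choose (a + b + 1) * a.choose j * b.choose j := by
        apply Finset.sum_congr rfl
        intro a _
        apply Finset.sum_congr rfl
        intro b _
        rw [keyM, Finset.mul_sum]
        apply Finset.sum_congr rfl
        intro j _
        ring
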